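/- Let (A, φ) be a non-commutative probability space with free cumulants κ_n, and let D ⊔ E = [q] with both D and E nonempty. Suppose Z_1,…,Z_q ∈ A and define κ̃_n(a_1,…,a_n) to equal κ_n(a_1,…,a_n) when all arguments are indexed in D or all are indexed in E, and 0 otherwise. If φ(Z_1⋯Z_q) = Σ_{π ∈ NC(D)} κ_π(Z_i : i ∈ D) · φ_{π̃}(Z_j : j ∈ E), where π̃ is the maximal non-crossing completion of π on E, then φ(Z_1⋯Z_q) = Σ_{σ ∈ NC(q)} κ̃_σ(Z_1,…,Z_q). -/

import Mathlib

open Finset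

attribute [local instance] Classical.propDecidable

/-- `P` is a non-crossing partition of the finite set `S ⊆ ℕ`. -/
def IsNCPartition (S : Finset ℕ) (P : Finset (Finset ℕ)) : Prop :=
  (∀ B ∈ P, B.Nonempty) ∧ (∀ B ∈ P, B ⊆ S) ∧
  (∀ x ∈ S, ∃ B ∈ P, x ∈ B) ∧
  (∀ B ∈ P, ∀ B' ∈ P, B ≠ B' → Disjoint B B') ∧
  (∀ B ∈ P, ∀ B' ∈ P, B ≠ B' →
    ∀ a ∈ B, ∀ b ∈ B', ∀ c ∈ B, ∀ d ∈ B', ¬ (a < b ∧ b < c ∧ c < d))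

/-- Refinement order on partitions: every block of `P` is contained in a block of `Q`. -/
def refines (P Q : Finset (Finset ℕ)) : Prop := ∀ B ∈ P, ∃ C ∈ Q, B ⊆ C

/-- The finite set of all non-crossing partitions of `S`. -/
noncomputable def NCset (S : Finset ℕ) : Finset (Finset (Finset ℕ)) :=
  S.powerset.powerset.filter (IsNCPartition S)

/-- Multiplicative extension of a family of functionals `f n : (Fin n → A) → ℂ` over a
partition `P`: each block contributes `f |C|` evaluated on the entries of `a` indexed by the
block, taken in increasing order. -/
noncomputable def extMul {A : Type*} (f : ∀ n, (Fin n → A) → ℂ)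
    (P : Finset (Finset ℕ)) (a : ℕ → A) : ℂ :=
  ∏ C ∈ P, f C.card (fun i => a ((C.orderIsoOfFin rfl i : ℕ)))

/-- Freeness of a family of subsets with respect to a functional `τ`:
alternating centered products vanish. -/
def IsFreeFamily {E : Type*} [Monoid E] {I : Type*} (τ : E → ℂ) (B : I → Set E) : Prop :=
  ∀ (q : ℕ), 1 ≤ q → ∀ (ind : Fin q → I) (a : Fin q → E),
    (∀ j, a j ∈ B (ind j)) → (∀ j, τ (a j) = 0) →
    (∀ j : Fin q, ∀ h : (j : ℕ) + 1 < q, ind j ≠ ind ⟨(j : ℕ) + 1, h⟩) →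
    τ (List.ofFn a).prod = 0


section Aux

variable {A : Type*}

lemma mem_NCset {S : Finset ℕ} {P : Finset (Finset ℕ)} :
    P ∈ NCset S ↔ IsNCPartition S P := by
  constructor
  · exact fun h => (Finset.mem_filter.1 h).2
  · intro h
    exact Finset.mem_filter.2 ⟨Finset.mem_powerset.2 fun B hB =>
      Finset.mem_powerset.2 (h.2.1 B hB), h⟩

lemma f_cast (f : ∀ n, (Fin n → A) → ℂ) {n m : ℕ} (h : n = m)
    (g : Fin n → A) (g' : Fin m → A) (hg : ∀ i : Fin n, g i = g' (Fin.cast h i)) :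
    f n g = f m g' := by
  subst h
  congr 1
  funext i
  exact hg i

lemma orderEmbOfFin_cast {s : Finset ℕ} {k l : ℕ} (h1 : s.card = k) (h2 : s.card = l)
    (hkl : k = l) (i : Fin k) :
    s.orderEmbOfFin h1 i = s.orderEmbOfFin h2 (Fin.cast hkl i) := by
  subst hkl; rfl

variable {S T : Finset ℕ} {m m' : ℕ → ℕ}

lemma injOn_of_mono (hmono : ∀ i ∈ S, ∀ j ∈ S, i < j → m i < m j) :
    ∀ i ∈ S, ∀ j ∈ S, m i = m j → i = j := by
  intro i hi j hj hij
  rcases lt_trichotomy i j with h | h | h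
  · exact absurd hij (Nat.ne_of_lt (hmono i hi j hj h))
  · exact h
  · exact absurd hij.symm (Nat.ne_of_lt (hmono j hj i hi h))

lemma lt_of_image_lt (hmono : ∀ i ∈ S, ∀ j ∈ S, i < j → m i < m j) :
    ∀ i ∈ S, ∀ j ∈ S, m i < m j → i < j := by
  intro i hi j hj hij
  rcases lt_trichotomy i j with h | h | h
  · exact h
  · subst h; omega
  · exact absurd (hmono j hj i hi h) (by omega)

lemma orderEmb_image {B : Finset ℕ} (hBS : B ⊆ S)
    (hmono : ∀ i ∈ S, ∀ j ∈ S, i < j → m i < m j)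
    {k : ℕ} (hb : B.card = k) (hc : (B.image m).card = k) (i : Fin k) :
    (B.image m).orderEmbOfFin hc i = m (B.orderEmbOfFin hb i) := by
  have h := Finset.orderEmbOfFin_unique (f := fun i : Fin k => m (B.orderEmbOfFin hb i)) hc
    (fun x => Finset.mem_image_of_mem _ (Finset.orderEmbOfFin_mem B hb x))
    (fun x y hxy => hmono _ (hBS (Finset.orderEmbOfFin_mem B hb x)) _
      (hBS (Finset.orderEmbOfFin_mem B hb y)) ((B.orderEmbOfFin hb).strictMono hxy))
  exact (congrFun h i).symm

lemma image_image_inv (hinv1 : ∀ i ∈ S, m' (m i) = i) {B : Finset ℕ} (hBS : B ⊆ S) :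
    (B.image m).image m' = B := by
  rw [Finset.image_image]
  calc B.image (m' ∘ m) = B.image id :=
        Finset.image_congr (fun x hx => hinv1 x (hBS hx))
    _ = B := Finset.image_id

lemma IsNCPartition_image
    (hmST : ∀ i ∈ S, m i ∈ T) (hm'TS : ∀ j ∈ T, m' j ∈ S)
    (hinv1 : ∀ i ∈ S, m' (m i) = i) (hinv2 : ∀ j ∈ T, m (m' j) = j)
    (hmono : ∀ i ∈ S, ∀ j ∈ S, i < j → m i < m j)
    {P : Finset (Finset ℕ)} (hP : IsNCPartition S P) :
    IsNCPartition T (P.image (fun B => B.image m)) := by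
  obtain ⟨h1, h2, h3, h4, h5⟩ := hP
  have hinj := injOn_of_mono hmono
  refine ⟨?_, ?_, ?_, ?_, ?_⟩
  · rintro C hC
    obtain ⟨B, hB, rfl⟩ := Finset.mem_image.1 hC
    exact (h1 B hB).image m
  · rintro C hC
    obtain ⟨B, hB, rfl⟩ := Finset.mem_image.1 hC
    intro x hx
    obtain ⟨y, hy, rfl⟩ := Finset.mem_image.1 hx
    exact hmST y (h2 B hB hy)
  · intro x hx
    obtain ⟨B, hB, hmem⟩ := h3 (m' x) (hm'TS x hx)
    exact ⟨B.image m, Finset.mem_image_of_mem _ hB,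
      by rw [← hinv2 x hx]; exact Finset.mem_image_of_mem _ hmem⟩
  · rintro C hC C' hC' hne
    obtain ⟨B, hB, rfl⟩ := Finset.mem_image.1 hC
    obtain ⟨B', hB', rfl⟩ := Finset.mem_image.1 hC'
    have hBB' : B ≠ B' := fun h => hne (by rw [h])
    rw [Finset.disjoint_left]
    intro x hx hx'
    obtain ⟨y, hy, rfl⟩ := Finset.mem_image.1 hx
    obtain ⟨y', hy', hyy⟩ := Finset.mem_image.1 hx'
    have : y' = y := hinj y' (h2 B' hB' hy') y (h2 B hB hy) hyy
    subst this
    exact (Finset.disjoint_left.1 (h4 B hB B' hB' hBB')) hy hy'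
  · rintro C hC C' hC' hne a ha b hb c hc d hd ⟨hab, hbc, hcd⟩
    obtain ⟨B, hB, rfl⟩ := Finset.mem_image.1 hC
    obtain ⟨B', hB', rfl⟩ := Finset.mem_image.1 hC'
    have hBB' : B ≠ B' := fun h => hne (by rw [h])
    obtain ⟨a', ha', rfl⟩ := Finset.mem_image.1 ha
    obtain ⟨b', hb', rfl⟩ := Finset.mem_image.1 hb
    obtain ⟨c', hc', rfl⟩ := Finset.mem_image.1 hc
    obtain ⟨d', hd', rfl⟩ := Finset.mem_image.1 hd
    have hrefl := lt_of_image_lt hmono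
    exact h5 B hB B' hB' hBB' a' ha' b' hb' c' hc' d' hd'
      ⟨hrefl a' (h2 B hB ha') b' (h2 B' hB' hb') hab,
       hrefl b' (h2 B' hB' hb') c' (h2 B hB hc') hbc,
       hrefl c' (h2 B hB hc') d' (h2 B' hB' hd') hcd⟩

lemma extMul_image (f : ∀ n, (Fin n → A) → ℂ) {Z a : ℕ → A}
    (hmono : ∀ i ∈ S, ∀ j ∈ S, i < j → m i < m j)
    (hinv1 : ∀ i ∈ S, m' (m i) = i)
    {P : Finset (Finset ℕ)} (hPsub : ∀ B ∈ P, B ⊆ S)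
    (ha : ∀ i ∈ S, a i = Z (m i)) :
    extMul f (P.image (fun B => B.image m)) Z = extMul f P a := by
  unfold extMul
  rw [Finset.prod_image ?hinj]
  case hinj =>
    intro B hB B' hB' h
    rw [← image_image_inv hinv1 (hPsub B hB), show B.image m = B'.image m from h, image_image_inv hinv1 (hPsub B' hB')]
  apply Finset.prod_congr rfl
  intro B hB
  have hBS := hPsub B hB
  have hinjB : Set.InjOn m B := fun x hx y hy h =>
    injOn_of_mono hmono x (hBS hx) y (hBS hy) h
  have hc : (B.image m).card = B.card := Finset.card_image_of_injOn hinjB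
  refine f_cast f hc _ _ ?_
  intro i
  rw [Finset.coe_orderIsoOfFin_apply, Finset.coe_orderIsoOfFin_apply]
  rw [orderEmb_image hBS hmono hc.symm rfl i]
  rw [ha _ (hBS (Finset.orderEmbOfFin_mem B rfl (Fin.cast hc i)))]
  rw [orderEmbOfFin_cast hc.symm rfl hc i]

lemma sum_NCset_transport (f : ∀ n, (Fin n → A) → ℂ) (Z a : ℕ → A)
    (hmST : ∀ i ∈ S, m i ∈ T) (hm'TS : ∀ j ∈ T, m' j ∈ S)
    (hinv1 : ∀ i ∈ S, m' (m i) = i) (hinv2 : ∀ j ∈ T, m (m' j) = j)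
    (hmono : ∀ i ∈ S, ∀ j ∈ S, i < j → m i < m j)
    (ha : ∀ i ∈ S, a i = Z (m i)) :
    ∑ P ∈ NCset S, extMul f P a = ∑ Q ∈ NCset T, extMul f Q Z := by
  have hmono' : ∀ i ∈ T, ∀ j ∈ T, i < j → m' i < m' j := by
    intro i hi j hj hij
    rcases lt_trichotomy (m' i) (m' j) with h | h | h
    · exact h
    · exfalso
      have : m (m' i) = m (m' j) := by rw [h]
      rw [hinv2 i hi, hinv2 j hj] at this; omega
    · have := hmono _ (hm'TS j hj) _ (hm'TS i hi) h
      rw [hinv2 i hi, hinv2 j hj] at this; omega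
  refine Finset.sum_bij' (i := fun P _ => P.image (fun B => B.image m))
    (j := fun Q _ => Q.image (fun B => B.image m')) ?_ ?_ ?_ ?_ ?_
  · intro P hP
    exact mem_NCset.2 (IsNCPartition_image hmST hm'TS hinv1 hinv2 hmono (mem_NCset.1 hP))
  · intro Q hQ
    exact mem_NCset.2 (IsNCPartition_image hm'TS hmST hinv2 hinv1 hmono' (mem_NCset.1 hQ))
  · intro P hP
    have hPsub := (mem_NCset.1 hP).2.1
    rw [Finset.image_image]
    calc P.image ((fun B => B.image m') ∘ (fun B => B.image m))
        = P.image id := Finset.image_congr (fun B hB => image_image_inv hinv1 (hPsub B hB))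
      _ = P := Finset.image_id
  · intro Q hQ
    have hQsub := (mem_NCset.1 hQ).2.1
    rw [Finset.image_image]
    calc Q.image ((fun B => B.image m) ∘ (fun B => B.image m'))
        = Q.image id := Finset.image_congr (fun B hB => image_image_inv hinv2 (hQsub B hB))
      _ = Q := Finset.image_id
  · intro P hP
    exact (extMul_image f hmono hinv1 (mem_NCset.1 hP).2.1 ha).symm

end Aux

section Aux2

variable {A : Type*} [Ring A] [Algebra ℂ A]

lemma phi_block (φ : A → ℂ) (κ : ∀ n, (Fin n → A) → ℂ)
    (hmc : ∀ n : ℕ, 1 ≤ n → ∀ a : ℕ → A,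
      φ (((List.range n).map a).prod) = ∑ P ∈ NCset (Finset.range n), extMul κ P a)
    (Z : ℕ → A) (C : Finset ℕ) (hC : C.Nonempty) :
    φ (List.ofFn (fun i : Fin C.card => Z ((C.orderIsoOfFin rfl i : ℕ)))).prod
      = ∑ Q ∈ NCset C, extMul κ Q Z := by
  have hn1 : 1 ≤ C.card := Finset.card_pos.2 hC
  set n := C.card with hn
  let m : ℕ → ℕ := fun i => if h : i < n then C.orderEmbOfFin hn.symm ⟨i, h⟩ else 0
  let m' : ℕ → ℕ := fun j => if h : j ∈ C then ((C.orderIsoOfFin hn.symm).symm ⟨j, h⟩ : Fin n) else 0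
  let a : ℕ → A := fun i => Z (m i)
  have hmST : ∀ i ∈ Finset.range n, m i ∈ C := by
    intro i hi
    have h : i < n := Finset.mem_range.1 hi
    simpa [m, h] using Finset.orderEmbOfFin_mem C hn.symm ⟨i, h⟩
  have hm'TS : ∀ j ∈ C, m' j ∈ Finset.range n := by
    intro j hj
    simp only [m', dif_pos hj]
    exact Finset.mem_range.2 (((C.orderIsoOfFin hn.symm).symm ⟨j, hj⟩ : Fin n).isLt)
  have hinv1 : ∀ i ∈ Finset.range n, m' (m i) = i := by
    intro i hi
    have h : i < n := Finset.mem_range.1 hi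
    have hmem : m i ∈ C := hmST i hi
    simp only [m', dif_pos hmem]
    have : (⟨m i, hmem⟩ : {x // x ∈ C}) = C.orderIsoOfFin hn.symm ⟨i, h⟩ := by
      apply Subtype.ext
      simp [m, h, Finset.coe_orderIsoOfFin_apply]
    rw [this, OrderIso.symm_apply_apply]
  have hinv2 : ∀ j ∈ C, m (m' j) = j := by
    intro j hj
    have hlt : m' j < n := Finset.mem_range.1 (hm'TS j hj)
    simp only [m, dif_pos hlt]
    have h1 : (⟨m' j, hlt⟩ : Fin n) = (C.orderIsoOfFin hn.symm).symm ⟨j, hj⟩ := by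
      apply Fin.ext
      simp [m', dif_pos hj]
    rw [h1, ← Finset.coe_orderIsoOfFin_apply, OrderIso.apply_symm_apply]
  have hmono : ∀ i ∈ Finset.range n, ∀ j ∈ Finset.range n, i < j → m i < m j := by
    intro i hi j hj hij
    have h1 : i < n := Finset.mem_range.1 hi
    have h2 : j < n := Finset.mem_range.1 hj
    simp only [m, dif_pos h1, dif_pos h2]
    exact (C.orderEmbOfFin hn.symm).strictMono (by exact Fin.mk_lt_mk.2 hij)
  have key := hmc n hn1 a
  have hlist : ((List.range n).map a)
      = List.ofFn (fun i : Fin C.card => Z ((C.orderIsoOfFin rfl i : ℕ))) := by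
    apply List.ext_getElem
    · simp [hn]
    · intro i h1 h2
      simp only [List.getElem_map, List.getElem_range, List.getElem_ofFn]
      have hi : i < n := by simpa using h1
      simp only [a, m, dif_pos hi, Finset.coe_orderIsoOfFin_apply]
  rw [hlist] at key
  rw [key]
  exact sum_NCset_transport κ Z a hmST hm'TS hinv1 hinv2 hmono (fun i _ => rfl)

lemma prod_phi_blocks (φ : A → ℂ) (κ : ∀ n, (Fin n → A) → ℂ)
    (hmc : ∀ n : ℕ, 1 ≤ n → ∀ a : ℕ → A,
      φ (((List.range n).map a).prod) = ∑ P ∈ NCset (Finset.range n), extMul κ P a)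
    (Z : ℕ → A) {E : Finset ℕ} {T : Finset (Finset ℕ)} (hT : IsNCPartition E T) :
    extMul (fun n (v : Fin n → A) => φ (List.ofFn v).prod) T Z
      = ∑ ρ ∈ (NCset E).filter (fun ρ => refines ρ T), extMul κ ρ Z := by
  obtain ⟨hT1, hT2, hT3, hT4, hT5⟩ := hT
  have hstep : extMul (fun n (v : Fin n → A) => φ (List.ofFn v).prod) T Z
      = ∏ C ∈ T, ∑ Q ∈ NCset C, extMul κ Q Z := by
    unfold extMul
    exact Finset.prod_congr rfl (fun C hC => phi_block φ κ hmc Z C (hT1 C hC))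
  rw [hstep, Finset.prod_sum]
  refine Finset.sum_bij' (i := fun p _ => T.attach.biUnion (fun C => p C.1 C.2))
    (j := fun ρ _ => fun C hC => ρ.filter (fun B => B ⊆ C)) ?_ ?_ ?_ ?_ ?_
  · -- maps into the filter set
    intro p hp
    have hp' : ∀ C (hC : C ∈ T), IsNCPartition C (p C hC) :=
      fun C hC => mem_NCset.1 (Finset.mem_pi.1 hp C hC)
    have hmem : ∀ {B}, B ∈ T.attach.biUnion (fun C => p C.1 C.2) →
        ∃ C, ∃ hC : C ∈ T, B ∈ p C hC := by
      intro B hB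
      obtain ⟨⟨C, hC⟩, -, hB'⟩ := Finset.mem_biUnion.1 hB
      exact ⟨C, hC, hB'⟩
    rw [Finset.mem_filter]
    constructor
    · rw [mem_NCset]
      refine ⟨?_, ?_, ?_, ?_, ?_⟩
      · intro B hB
        obtain ⟨C, hC, hB'⟩ := hmem hB
        exact (hp' C hC).1 B hB'
      · intro B hB
        obtain ⟨C, hC, hB'⟩ := hmem hB
        exact ((hp' C hC).2.1 B hB').trans (hT2 C hC)
      · intro x hx
        obtain ⟨C, hC, hxC⟩ := hT3 x hx
        obtain ⟨B, hB, hxB⟩ := (hp' C hC).2.2.1 x hxC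
        exact ⟨B, Finset.mem_biUnion.2 ⟨⟨C, hC⟩, Finset.mem_attach _ _, hB⟩, hxB⟩
      · intro B hB B' hB' hne
        obtain ⟨C, hC, hB1⟩ := hmem hB
        obtain ⟨C', hC', hB1'⟩ := hmem hB'
        by_cases hCC : C = C'
        · subst hCC
          exact (hp' C hC).2.2.2.1 B hB1 B' hB1' hne
        · exact Finset.disjoint_of_subset_left ((hp' C hC).2.1 B hB1)
            (Finset.disjoint_of_subset_right ((hp' C' hC').2.1 B' hB1')
              (hT4 C hC C' hC' hCC))
      · intro B hB B' hB' hne a ha b hb c hc d hd ⟨hab, hbc, hcd⟩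
        obtain ⟨C, hC, hB1⟩ := hmem hB
        obtain ⟨C', hC', hB1'⟩ := hmem hB'
        by_cases hCC : C = C'
        · subst hCC
          exact (hp' C hC).2.2.2.2 B hB1 B' hB1' hne a ha b hb c hc d hd ⟨hab, hbc, hcd⟩
        · exact hT5 C hC C' hC' hCC a ((hp' C hC).2.1 B hB1 ha)
            b ((hp' C' hC').2.1 B' hB1' hb) c ((hp' C hC).2.1 B hB1 hc)
            d ((hp' C' hC').2.1 B' hB1' hd) ⟨hab, hbc, hcd⟩
    · intro B hB
      obtain ⟨C, hC, hB'⟩ := hmem hB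
      exact ⟨C, hC, (hp' C hC).2.1 B hB'⟩
  · -- inverse maps into pi
    intro ρ hρ
    rw [Finset.mem_filter] at hρ
    obtain ⟨hρ1, href⟩ := hρ
    obtain ⟨hq1, hq2, hq3, hq4, hq5⟩ := mem_NCset.1 hρ1
    rw [Finset.mem_pi]
    intro C hC
    rw [mem_NCset]
    refine ⟨?_, ?_, ?_, ?_, ?_⟩
    · intro B hB; exact hq1 B (Finset.mem_filter.1 hB).1
    · intro B hB; exact (Finset.mem_filter.1 hB).2
    · intro x hx
      have hxE : x ∈ E := hT2 C hC hx
      obtain ⟨B, hB, hxB⟩ := hq3 x hxE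
      obtain ⟨C', hC', hBC'⟩ := href B hB
      have hCC' : C = C' := by
        by_contra hne
        exact (Finset.disjoint_left.1 (hT4 C hC C' hC' hne)) hx (hBC' hxB)
      exact ⟨B, Finset.mem_filter.2 ⟨hB, hCC' ▸ hBC'⟩, hxB⟩
    · intro B hB B' hB' hne
      exact hq4 B (Finset.mem_filter.1 hB).1 B' (Finset.mem_filter.1 hB').1 hne
    · intro B hB B' hB' hne
      exact hq5 B (Finset.mem_filter.1 hB).1 B' (Finset.mem_filter.1 hB').1 hne
  · -- left inverse
    intro p hp
    have hp' : ∀ C (hC : C ∈ T), IsNCPartition C (p C hC) :=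
      fun C hC => mem_NCset.1 (Finset.mem_pi.1 hp C hC)
    funext C hC
    ext B
    simp only [Finset.mem_filter, Finset.mem_biUnion]
    constructor
    · rintro ⟨⟨⟨C', hC'⟩, -, hB'⟩, hBC⟩
      have hCC : C' = C := by
        by_contra hne
        obtain ⟨x, hx⟩ := (hp' C' hC').1 B hB'
        exact (Finset.disjoint_left.1 (hT4 C' hC' C hC hne))
          ((hp' C' hC').2.1 B hB' hx) (hBC hx)
      subst hCC
      exact hB'
    · intro hB
      exact ⟨⟨⟨C, hC⟩, Finset.mem_attach _ _, hB⟩, (hp' C hC).2.1 B hB⟩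
  · -- right inverse
    intro ρ hρ
    rw [Finset.mem_filter] at hρ
    obtain ⟨hρ1, href⟩ := hρ
    ext B
    simp only [Finset.mem_biUnion, Finset.mem_filter]
    constructor
    · rintro ⟨⟨C, hC⟩, -, hB, -⟩
      exact hB
    · intro hB
      obtain ⟨C, hC, hBC⟩ := href B hB
      exact ⟨⟨C, hC⟩, Finset.mem_attach _ _, hB, hBC⟩
  · -- values
    intro p hp
    have hp' : ∀ C (hC : C ∈ T), IsNCPartition C (p C hC) :=
      fun C hC => mem_NCset.1 (Finset.mem_pi.1 hp C hC)
    have hdisj : Set.PairwiseDisjoint (↑T.attach) (fun C : {x // x ∈ T} => p C.1 C.2) := by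
      rintro ⟨C, hC⟩ - ⟨C', hC'⟩ - hne
      have hCC : C ≠ C' := fun h => hne (Subtype.ext h)
      rw [Function.onFun, Finset.disjoint_left]
      intro B hB hB'
      obtain ⟨x, hx⟩ := (hp' C hC).1 B hB
      exact (Finset.disjoint_left.1 (hT4 C hC C' hC' hCC))
        ((hp' C hC).2.1 B hB hx) ((hp' C' hC').2.1 B hB' hx)
    unfold extMul
    rw [Finset.prod_biUnion hdisj]

end Aux2

lemma IsNC_union_of_refines {q : ℕ} {D E : Finset ℕ} (hDE : Disjoint D E)
    (hu : D ∪ E = Finset.range q)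
    {π Tρ ρ : Finset (Finset ℕ)} (hπ : IsNCPartition D π) (hT : IsNCPartition E Tρ)
    (hπT : IsNCPartition (Finset.range q) (π ∪ Tρ)) (hρ : IsNCPartition E ρ)
    (href : refines ρ Tρ) : IsNCPartition (Finset.range q) (π ∪ ρ) := by
  obtain ⟨hp1, hp2, hp3, hp4, hp5⟩ := hπ
  obtain ⟨hr1, hr2, hr3, hr4, hr5⟩ := hρ
  have hDq : D ⊆ Finset.range q := hu ▸ Finset.subset_union_left
  have hEq : E ⊆ Finset.range q := hu ▸ Finset.subset_union_right
  refine ⟨?_, ?_, ?_, ?_, ?_⟩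
  · intro B hB
    rcases Finset.mem_union.1 hB with h | h
    · exact hp1 B h
    · exact hr1 B h
  · intro B hB
    rcases Finset.mem_union.1 hB with h | h
    · exact (hp2 B h).trans hDq
    · exact (hr2 B h).trans hEq
  · intro x hx
    rcases Finset.mem_union.1 (hu ▸ hx) with h | h
    · obtain ⟨B, hB, hxB⟩ := hp3 x h
      exact ⟨B, Finset.mem_union_left _ hB, hxB⟩
    · obtain ⟨B, hB, hxB⟩ := hr3 x h
      exact ⟨B, Finset.mem_union_right _ hB, hxB⟩
  · intro B hB B' hB' hne
    rcases Finset.mem_union.1 hB with h | h <;> rcases Finset.mem_union.1 hB' with h' | h'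
    · exact hp4 B h B' h' hne
    · exact Finset.disjoint_of_subset_left (hp2 B h)
        (Finset.disjoint_of_subset_right (hr2 B' h') hDE)
    · exact Finset.disjoint_of_subset_left (hr2 B h)
        (Finset.disjoint_of_subset_right (hp2 B' h') hDE.symm)
    · exact hr4 B h B' h' hne
  · intro B hB B' hB' hne a ha b hb c hc d hd hcross
    rcases Finset.mem_union.1 hB with h | h <;> rcases Finset.mem_union.1 hB' with h' | h'
    · exact hp5 B h B' h' hne a ha b hb c hc d hd hcross
    · -- B ⊆ D, B' ∈ ρ with B' ⊆ C ∈ Tρ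
      obtain ⟨C, hC, hBC⟩ := href B' h'
      have hBneC : B ≠ C := by
        intro hEq
        obtain ⟨x, hx⟩ := hr1 B' h'
        exact (Finset.disjoint_left.1 hDE) (hp2 B h (hEq.symm ▸ hBC hx)) (hT.2.1 C hC (hBC hx))
      exact hπT.2.2.2.2 B (Finset.mem_union_left _ h) C (Finset.mem_union_right _ hC)
        hBneC a ha b (hBC hb) c hc d (hBC hd) hcross
    · obtain ⟨C, hC, hBC⟩ := href B h
      have hCneB' : C ≠ B' := by
        intro hEq
        obtain ⟨x, hx⟩ := hr1 B h
        exact (Finset.disjoint_left.1 hDE) (hp2 B' h' (hEq ▸ hBC hx : x ∈ B')) (hT.2.1 C hC (hBC hx))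
      exact hπT.2.2.2.2 C (Finset.mem_union_right _ hC) B' (Finset.mem_union_left _ h')
        hCneB' a (hBC ha) b hb c (hBC hc) d hd hcross
    · exact hr5 B h B' h' hne a ha b hb c hc d hd hcross

lemma filter_NCset {q : ℕ} {D E : Finset ℕ} (hDE : Disjoint D E)
    (hu : D ∪ E = Finset.range q)
    {σ : Finset (Finset ℕ)} (hσ : IsNCPartition (Finset.range q) σ)
    (hcond : ∀ B ∈ σ, B ⊆ D ∨ B ⊆ E) :
    IsNCPartition D (σ.filter (fun B => B ⊆ D)) := by
  obtain ⟨h1, h2, h3, h4, h5⟩ := hσ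
  refine ⟨fun B hB => h1 B (Finset.mem_filter.1 hB).1,
    fun B hB => (Finset.mem_filter.1 hB).2, ?_,
    fun B hB B' hB' => h4 B (Finset.mem_filter.1 hB).1 B' (Finset.mem_filter.1 hB').1,
    fun B hB B' hB' => h5 B (Finset.mem_filter.1 hB).1 B' (Finset.mem_filter.1 hB').1⟩
  intro x hx
  obtain ⟨B, hB, hxB⟩ := h3 x (hu ▸ Finset.mem_union_left E hx)
  rcases hcond B hB with h | h
  · exact ⟨B, Finset.mem_filter.2 ⟨hB, h⟩, hxB⟩
  · exact absurd (h hxB) (fun hxE => Finset.disjoint_left.1 hDE hx hxE)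


/-- Re-indexing the factorized mixed moment as a sum of modified cumulants
over all non-crossing partitions of [q]. -/
theorem stmt2 {A : Type*} [Ring A] [Algebra ℂ A]
    (φ : A → ℂ) (κ : ∀ n, (Fin n → A) → ℂ)
    (hmc : ∀ n : ℕ, 1 ≤ n → ∀ a : ℕ → A,
      φ (((List.range n).map a).prod) = ∑ P ∈ NCset (Finset.range n), extMul κ P a)
    (q : ℕ) (hq : 1 ≤ q) (D E : Finset ℕ)
    (hDE : Disjoint D E) (hu : D ∪ E = Finset.range q)
    (hD : D.Nonempty) (hE : E.Nonempty)
    (tilde : Finset (Finset ℕ) → Finset (Finset ℕ))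
    (htilde : ∀ π ∈ NCset D, IsNCPartition E (tilde π) ∧
      IsNCPartition (Finset.range q) (π ∪ tilde π) ∧
      ∀ ρ, IsNCPartition E ρ → IsNCPartition (Finset.range q) (π ∪ ρ) →
        refines ρ (tilde π))
    (Z : ℕ → A)
    (hfact : φ (((List.range q).map Z).prod)
      = ∑ π ∈ NCset D, extMul κ π Z *
          extMul (fun n (v : Fin n → A) => φ (List.ofFn v).prod) (tilde π) Z) :
    φ (((List.range q).map Z).prod)
      = ∑ σ ∈ NCset (Finset.range q),
          (if ∀ B ∈ σ, B ⊆ D ∨ B ⊆ E then extMul κ σ Z else 0) := by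
  rw [hfact, ← Finset.sum_filter]
  have step : ∀ π ∈ NCset D,
      extMul κ π Z * extMul (fun n (v : Fin n → A) => φ (List.ofFn v).prod) (tilde π) Z
        = ∑ ρ ∈ (NCset E).filter (fun ρ => IsNCPartition (Finset.range q) (π ∪ ρ)),
            extMul κ π Z * extMul κ ρ Z := by
    intro π hπ
    obtain ⟨hT, hπT, hmax⟩ := htilde π hπ
    rw [prod_phi_blocks φ κ hmc Z hT]
    have hfeq : (NCset E).filter (fun ρ => refines ρ (tilde π))
        = (NCset E).filter (fun ρ => IsNCPartition (Finset.range q) (π ∪ ρ)) := by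
      ext ρ
      simp only [Finset.mem_filter, and_congr_right_iff]
      intro hρ
      constructor
      · intro href
        exact IsNC_union_of_refines hDE hu (mem_NCset.1 hπ) hT hπT (mem_NCset.1 hρ) href
      · intro hnc
        exact hmax ρ (mem_NCset.1 hρ) hnc
    rw [hfeq, Finset.mul_sum]
  rw [Finset.sum_congr rfl step, Finset.sum_sigma']
  have hu' : E ∪ D = Finset.range q := by rw [Finset.union_comm]; exact hu
  refine Finset.sum_bij' (i := fun p _ => p.1 ∪ p.2)
    (j := fun σ _ => ⟨σ.filter (fun B => B ⊆ D), σ.filter (fun B => B ⊆ E)⟩)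
    ?_ ?_ ?_ ?_ ?_
  · -- forward membership
    rintro ⟨π, ρ⟩ hp
    obtain ⟨hπ, hρ⟩ := Finset.mem_sigma.1 hp
    obtain ⟨hρE, hNC⟩ := Finset.mem_filter.1 hρ
    refine Finset.mem_filter.2 ⟨mem_NCset.2 hNC, ?_⟩
    intro B hB
    rcases Finset.mem_union.1 hB with h | h
    · exact Or.inl ((mem_NCset.1 hπ).2.1 B h)
    · exact Or.inr ((mem_NCset.1 hρE).2.1 B h)
  · -- backward membership
    intro σ hσ
    obtain ⟨hσNC, hcond⟩ := Finset.mem_filter.1 hσ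
    have hσNC' := mem_NCset.1 hσNC
    refine Finset.mem_sigma.2 ⟨mem_NCset.2 (filter_NCset hDE hu hσNC' hcond), ?_⟩
    refine Finset.mem_filter.2 ⟨mem_NCset.2 (filter_NCset hDE.symm hu' hσNC'
      (fun B hB => (hcond B hB).symm)), ?_⟩
    have hunion : σ.filter (fun B => B ⊆ D) ∪ σ.filter (fun B => B ⊆ E) = σ := by
      ext B
      simp only [Finset.mem_union, Finset.mem_filter]
      constructor
      · rintro (⟨h, -⟩ | ⟨h, -⟩) <;> exact h
      · intro h
        rcases hcond B h with h' | h'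
        · exact Or.inl ⟨h, h'⟩
        · exact Or.inr ⟨h, h'⟩
    rw [hunion]
    exact hσNC'
  · -- left inverse
    rintro ⟨π, ρ⟩ hp
    obtain ⟨hπ, hρ⟩ := Finset.mem_sigma.1 hp
    obtain ⟨hρE, -⟩ := Finset.mem_filter.1 hρ
    have hπ' := mem_NCset.1 hπ
    have hρ' := mem_NCset.1 hρE
    have h1 : (π ∪ ρ).filter (fun B => B ⊆ D) = π := by
      ext B
      simp only [Finset.mem_filter, Finset.mem_union]
      constructor
      · rintro ⟨h | h, hBD⟩
        · exact h
        · obtain ⟨x, hx⟩ := hρ'.1 B h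
          exact absurd (hρ'.2.1 B h hx) (fun hxE => Finset.disjoint_left.1 hDE (hBD hx) hxE)
      · intro h
        exact ⟨Or.inl h, hπ'.2.1 B h⟩
    have h2 : (π ∪ ρ).filter (fun B => B ⊆ E) = ρ := by
      ext B
      simp only [Finset.mem_filter, Finset.mem_union]
      constructor
      · rintro ⟨h | h, hBE⟩
        · obtain ⟨x, hx⟩ := hπ'.1 B h
          exact absurd (hπ'.2.1 B h hx) (fun hxD => Finset.disjoint_left.1 hDE hxD (hBE hx))
        · exact h
      · intro h
        exact ⟨Or.inr h, hρ'.2.1 B h⟩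
    exact Sigma.ext h1 (heq_of_eq h2)
  · -- right inverse
    intro σ hσ
    obtain ⟨hσNC, hcond⟩ := Finset.mem_filter.1 hσ
    ext B
    simp only [Finset.mem_union, Finset.mem_filter]
    constructor
    · rintro (⟨h, -⟩ | ⟨h, -⟩) <;> exact h
    · intro h
      rcases hcond B h with h' | h'
      · exact Or.inl ⟨h, h'⟩
      · exact Or.inr ⟨h, h'⟩
  · -- values
    rintro ⟨π, ρ⟩ hp
    obtain ⟨hπ, hρ⟩ := Finset.mem_sigma.1 hp
    obtain ⟨hρE, -⟩ := Finset.mem_filter.1 hρ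
    have hπ' := mem_NCset.1 hπ
    have hρ' := mem_NCset.1 hρE
    have hdisj : Disjoint π ρ := by
      rw [Finset.disjoint_left]
      intro B hBπ hBρ
      obtain ⟨x, hx⟩ := hπ'.1 B hBπ
      exact Finset.disjoint_left.1 hDE (hπ'.2.1 B hBπ hx) (hρ'.2.1 B hBρ hx)
    show extMul κ π Z * extMul κ ρ Z = extMul κ (π ∪ ρ) Z
    unfold extMul
    rw [Finset.prod_union hdisj]
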